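/- arXiv:1909.11527 — 4 statements merged into one kernel-verified Lean document; each statement's English description precedes it below -/
import Mathlib

section
/- Let G ∈ 𝕆^{n×k} with tr(GᵀD) ≠ 0 be a local maximizer of η on 𝕆^{n×k}. Then the range of G is an eigenspace of E(G), i.e., E(G) G = G (Gᵀ E(G) G), and the smallest eigenvalue of the symmetric k×k matrix Gᵀ E(G) G is at most μ_k, where μ₁ ≤ μ₂ ≤ … ≤ μ_n are the eigenvalues of E(G) arranged in nondecreasing order (counted with multiplicity). -/
open Matrix

/-- The objective `η(G) = tr(GᵀD)² / tr(GᵀAG)`. -/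
noncomputable def eta {n k : ℕ} (A : Matrix (Fin n) (Fin n) ℝ)
    (D G : Matrix (Fin n) (Fin k) ℝ) : ℝ :=
  (Matrix.trace (Gᵀ * D)) ^ 2 / Matrix.trace (Gᵀ * A * G)

/-- `ξ(G) = tr(GᵀAG) / tr(GᵀD)`. -/
noncomputable def xi {n k : ℕ} (A : Matrix (Fin n) (Fin n) ℝ)
    (D G : Matrix (Fin n) (Fin k) ℝ) : ℝ :=
  Matrix.trace (Gᵀ * A * G) / Matrix.trace (Gᵀ * D)

/-- `sym(B) = (B + Bᵀ)/2`. -/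
noncomputable def symPart {k : ℕ} (B : Matrix (Fin k) (Fin k) ℝ) : Matrix (Fin k) (Fin k) ℝ :=
  (1 / 2 : ℝ) • (B + Bᵀ)

/-- `M(G) = sym(GᵀAG − ξ(G)·GᵀD)`. -/
noncomputable def Mmat {n k : ℕ} (A : Matrix (Fin n) (Fin n) ℝ)
    (D G : Matrix (Fin n) (Fin k) ℝ) : Matrix (Fin k) (Fin k) ℝ :=
  symPart (Gᵀ * A * G - xi A D G • (Gᵀ * D))

/-- `E(G) = A − ξ(G)·(DGᵀ + GDᵀ)`. -/
noncomputable def Emat {n k : ℕ} (A : Matrix (Fin n) (Fin n) ℝ)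
    (D G : Matrix (Fin n) (Fin k) ℝ) : Matrix (Fin n) (Fin n) ℝ :=
  A - xi A D G • (D * Gᵀ + G * Dᵀ)

/-- The Frobenius norm of a real matrix. -/
noncomputable def frobNorm {n k : ℕ} (M : Matrix (Fin n) (Fin k) ℝ) : ℝ :=
  Real.sqrt (∑ i, ∑ j, (M i j) ^ 2)

/-- `G` is a local maximizer of `η` on the Stiefel manifold `𝕆^{n×k}`. -/
def IsLocalMaxEta {n k : ℕ} (A : Matrix (Fin n) (Fin n) ℝ)
    (D G : Matrix (Fin n) (Fin k) ℝ) : Prop :=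
  Gᵀ * G = 1 ∧ ∃ ε > (0 : ℝ), ∀ G' : Matrix (Fin n) (Fin k) ℝ,
    G'ᵀ * G' = 1 → frobNorm (G' - G) < ε → eta A D G' ≤ eta A D G

/-- If `A` is symmetric then `E(G)` is symmetric (Hermitian over `ℝ`). -/
lemma Emat_isHermitian {n k : ℕ} {A : Matrix (Fin n) (Fin n) ℝ} (hA : A.IsHermitian)
    (D G : Matrix (Fin n) (Fin k) ℝ) : (Emat A D G).IsHermitian := by
  have hAT : Aᵀ = A := by
    rw [← Matrix.conjTranspose_eq_transpose_of_trivial]; exact hA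
  show (Emat A D G)ᴴ = Emat A D G
  rw [Matrix.conjTranspose_eq_transpose_of_trivial]
  simp [Emat, Matrix.transpose_sub, Matrix.transpose_smul, Matrix.transpose_add,
    Matrix.transpose_mul, Matrix.transpose_transpose, hAT, add_comm]

/-- Congruence `Gᵀ E G` of a symmetric matrix is symmetric. -/
lemma transpose_mul_mul_isHermitian {n k : ℕ} {E : Matrix (Fin n) (Fin n) ℝ}
    (hE : E.IsHermitian) (G : Matrix (Fin n) (Fin k) ℝ) : (Gᵀ * E * G).IsHermitian := by
  have := Matrix.isHermitian_conjTranspose_mul_mul G hE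
  rwa [Matrix.conjTranspose_eq_transpose_of_trivial] at this


namespace StiefelAux


lemma trace_vecMulVec {k : ℕ} (x y : Fin k → ℝ) :
    Matrix.trace (vecMulVec x y) = x ⬝ᵥ y := by
  simp [Matrix.trace, vecMulVec_apply, dotProduct, Matrix.diag]

lemma transpose_vecMulVec' {m l : ℕ} (x : Fin m → ℝ) (y : Fin l → ℝ) :
    (vecMulVec x y)ᵀ = vecMulVec y x := by
  ext i j; simp [vecMulVec_apply, mul_comm]

lemma mul_vecMulVec {m l r : ℕ} (M : Matrix (Fin m) (Fin l) ℝ) (x : Fin l → ℝ) (y : Fin r → ℝ) :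
    M * vecMulVec x y = vecMulVec (M *ᵥ x) y := by
  ext i j
  simp [Matrix.mul_apply, vecMulVec_apply, Matrix.mulVec, dotProduct, Finset.sum_mul, mul_assoc]

lemma vecMulVec_mul {m l r : ℕ} (x : Fin m → ℝ) (y : Fin l → ℝ) (M : Matrix (Fin l) (Fin r) ℝ) :
    vecMulVec x y * M = vecMulVec x (Mᵀ *ᵥ y) := by
  ext i j
  simp only [Matrix.mul_apply, vecMulVec_apply, Matrix.mulVec, dotProduct, Matrix.transpose_apply,
    Finset.mul_sum]
  exact Finset.sum_congr rfl fun l _ => by ring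

lemma vecMulVec_mul_vecMulVec {a b c : ℕ} (x : Fin a → ℝ) (y z : Fin b → ℝ) (t : Fin c → ℝ) :
    vecMulVec x y * vecMulVec z t = (y ⬝ᵥ z) • vecMulVec x t := by
  ext i j
  simp only [Matrix.mul_apply, vecMulVec_apply, Matrix.smul_apply, dotProduct, smul_eq_mul,
    Finset.sum_mul]
  exact Finset.sum_congr rfl fun l _ => by ring

lemma smul_vecMulVec {m l : ℕ} (r : ℝ) (x : Fin m → ℝ) (y : Fin l → ℝ) :
    vecMulVec (r • x) y = r • vecMulVec x y := by
  ext i j; simp [vecMulVec_apply, mul_assoc]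

lemma vecMulVec_smul' {m l : ℕ} (r : ℝ) (x : Fin m → ℝ) (y : Fin l → ℝ) :
    vecMulVec x (r • y) = r • vecMulVec x y := by
  ext i j; simp [vecMulVec_apply]; ring

lemma mulVec_dot {m l : ℕ} (M : Matrix (Fin m) (Fin l) ℝ) (x : Fin l → ℝ) (y : Fin m → ℝ) :
    (M *ᵥ x) ⬝ᵥ y = x ⬝ᵥ (Mᵀ *ᵥ y) := by
  rw [dotProduct_comm, dotProduct_mulVec, ← mulVec_transpose, dotProduct_comm]

section Expand

variable {n k : ℕ} (A : Matrix (Fin n) (Fin n) ℝ) (D G : Matrix (Fin n) (Fin k) ℝ)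
  (w : Fin n → ℝ) (c : Fin k → ℝ)

lemma quad_matrix :
    (G + vecMulVec w c)ᵀ * (G + vecMulVec w c)
      = Gᵀ * G + vecMulVec (Gᵀ *ᵥ w) c + vecMulVec c (Gᵀ *ᵥ w)
        + (w ⬝ᵥ w) • vecMulVec c c := by
  rw [transpose_add, transpose_vecMulVec', Matrix.add_mul, Matrix.mul_add, Matrix.mul_add,
    mul_vecMulVec, vecMulVec_mul, vecMulVec_mul_vecMulVec]
  abel

lemma trace_lin :
    Matrix.trace ((G + vecMulVec w c)ᵀ * D)
      = Matrix.trace (Gᵀ * D) + (D *ᵥ c) ⬝ᵥ w := by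
  rw [transpose_add, transpose_vecMulVec', Matrix.add_mul, vecMulVec_mul, Matrix.trace_add,
    trace_vecMulVec, dotProduct_comm, mulVec_dot, transpose_transpose, dotProduct_comm]

lemma trace_quad :
    Matrix.trace ((G + vecMulVec w c)ᵀ * A * (G + vecMulVec w c))
      = Matrix.trace (Gᵀ * A * G) + (A *ᵥ w) ⬝ᵥ (G *ᵥ c) + (Aᵀ *ᵥ w) ⬝ᵥ (G *ᵥ c)
        + (c ⬝ᵥ c) * (w ⬝ᵥ (A *ᵥ w)) := by
  have e1 : (G + vecMulVec w c)ᵀ * A * (G + vecMulVec w c)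
      = Gᵀ * A * G + vecMulVec ((Gᵀ * A) *ᵥ w) c + vecMulVec c (Gᵀ *ᵥ (Aᵀ *ᵥ w))
        + ((Aᵀ *ᵥ w) ⬝ᵥ w) • vecMulVec c c := by
    rw [transpose_add, transpose_vecMulVec', Matrix.add_mul, vecMulVec_mul,
      Matrix.mul_add, Matrix.add_mul, Matrix.add_mul, mul_vecMulVec, vecMulVec_mul,
      vecMulVec_mul_vecMulVec, ← mulVec_mulVec]
    abel
  rw [e1, Matrix.trace_add, Matrix.trace_add, Matrix.trace_add, Matrix.trace_smul,
    trace_vecMulVec, trace_vecMulVec, trace_vecMulVec]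
  rw [← mulVec_mulVec, mulVec_dot (Gᵀ), transpose_transpose]
  have h3 : c ⬝ᵥ (Gᵀ *ᵥ (Aᵀ *ᵥ w)) = (Aᵀ *ᵥ w) ⬝ᵥ (G *ᵥ c) := by
    rw [dotProduct_comm, mulVec_dot (Gᵀ), transpose_transpose]
  have h4 : (Aᵀ *ᵥ w) ⬝ᵥ w = w ⬝ᵥ (A *ᵥ w) := by
    rw [mulVec_dot, transpose_transpose, dotProduct_comm]
  rw [h3, h4, smul_eq_mul]
  ring

end Expand

section Curve

variable {n k : ℕ} {A : Matrix (Fin n) (Fin n) ℝ} {D G : Matrix (Fin n) (Fin k) ℝ}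
  {v : Fin n → ℝ} {c : Fin k → ℝ} (C s : ℝ)
  (hG : Gᵀ * G = 1) (hv : v ⬝ᵥ v = 1) (hGv : Gᵀ *ᵥ v = 0) (hc : c ⬝ᵥ c = 1)

include hG hc in
lemma Gu_eq : Gᵀ *ᵥ (G *ᵥ c) = c := by
  rw [mulVec_mulVec, hG, one_mulVec]

include hG hGv hc in
lemma Gt_w : Gᵀ *ᵥ (C • (G *ᵥ c) + s • v) = C • c := by
  rw [mulVec_add, mulVec_smul, mulVec_smul, Gu_eq hG hc, hGv, smul_zero, add_zero]

include hG hv hGv hc in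
lemma w_dot_w :
    (C • (G *ᵥ c) + s • v) ⬝ᵥ (C • (G *ᵥ c) + s • v) = C ^ 2 + s ^ 2 := by
  have h1 : (G *ᵥ c) ⬝ᵥ (G *ᵥ c) = 1 := by rw [mulVec_dot, Gu_eq hG hc, hc]
  have h2 : (G *ᵥ c) ⬝ᵥ v = 0 := by rw [mulVec_dot, hGv, dotProduct_zero]
  have h3 : v ⬝ᵥ (G *ᵥ c) = 0 := by rw [dotProduct_comm]; exact h2
  simp only [dotProduct_add, add_dotProduct, dotProduct_smul, smul_dotProduct, smul_eq_mul,
    h1, h2, h3, hv]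
  ring

include hG hv hGv hc in
lemma curve_orthonormal (hcs : 2 * C + C ^ 2 + s ^ 2 = 0) :
    (G + vecMulVec (C • (G *ᵥ c) + s • v) c)ᵀ * (G + vecMulVec (C • (G *ᵥ c) + s • v) c)
      = 1 := by
  rw [quad_matrix, Gt_w C s hG hGv hc, hG, w_dot_w C s hG hv hGv hc, smul_vecMulVec,
    vecMulVec_smul']
  have h : (1 : Matrix (Fin k) (Fin k) ℝ) + C • vecMulVec c c + C • vecMulVec c c
      + (C ^ 2 + s ^ 2) • vecMulVec c c
      = 1 + (2 * C + C ^ 2 + s ^ 2) • vecMulVec c c := by module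
  rw [h, hcs, zero_smul, add_zero]

include hGv hc in
lemma trace_lin_curve :
    Matrix.trace ((G + vecMulVec (C • (G *ᵥ c) + s • v) c)ᵀ * D)
      = Matrix.trace (Gᵀ * D) + ((G *ᵥ c) ⬝ᵥ (D *ᵥ c)) * C + (v ⬝ᵥ (D *ᵥ c)) * s := by
  rw [trace_lin]
  simp only [dotProduct_add, dotProduct_smul, smul_eq_mul]
  rw [dotProduct_comm (D *ᵥ c) (G *ᵥ c), dotProduct_comm (D *ᵥ c) v]
  ring

include hG hv hGv hc in
lemma trace_quad_curve (hAT : Aᵀ = A) (hcs : 2 * C + C ^ 2 + s ^ 2 = 0) :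
    Matrix.trace ((G + vecMulVec (C • (G *ᵥ c) + s • v) c)ᵀ * A
        * (G + vecMulVec (C • (G *ᵥ c) + s • v) c))
      = Matrix.trace (Gᵀ * A * G)
        + ((v ⬝ᵥ (A *ᵥ v)) - ((G *ᵥ c) ⬝ᵥ (A *ᵥ (G *ᵥ c)))) * s ^ 2
        + 2 * (v ⬝ᵥ (A *ᵥ (G *ᵥ c))) * (s * (1 + C)) := by
  have hsymdot : ∀ x y : Fin n → ℝ, (A *ᵥ x) ⬝ᵥ y = x ⬝ᵥ (A *ᵥ y) := by
    intro x y; rw [mulVec_dot, hAT]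
  have huv : (G *ᵥ c) ⬝ᵥ (A *ᵥ v) = v ⬝ᵥ (A *ᵥ (G *ᵥ c)) := by
    rw [← hsymdot, dotProduct_comm]
  rw [trace_quad, hAT]
  set u := G *ᵥ c
  have e1 : (A *ᵥ (C • u + s • v)) ⬝ᵥ u
      = C * (u ⬝ᵥ (A *ᵥ u)) + s * (v ⬝ᵥ (A *ᵥ u)) := by
    rw [mulVec_add, mulVec_smul, mulVec_smul, add_dotProduct, smul_dotProduct, smul_dotProduct,
      hsymdot u u, smul_eq_mul, smul_eq_mul, hsymdot v u]
  have e3 : (C • u + s • v) ⬝ᵥ (A *ᵥ (C • u + s • v))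
      = C ^ 2 * (u ⬝ᵥ (A *ᵥ u)) + 2 * C * s * (v ⬝ᵥ (A *ᵥ u)) + s ^ 2 * (v ⬝ᵥ (A *ᵥ v)) := by
    rw [mulVec_add, mulVec_smul, mulVec_smul]
    simp only [dotProduct_add, add_dotProduct, dotProduct_smul, smul_dotProduct, smul_eq_mul]
    rw [huv]
    ring
  rw [e1, e3, hc]
  linear_combination (u ⬝ᵥ (A *ᵥ u)) * hcs

end Curve


lemma star_triv {m : ℕ} (x : Fin m → ℝ) : star x = x := by
  funext i; simp

lemma trace_quad_pos {n k : ℕ} (hk : 0 < k) {A : Matrix (Fin n) (Fin n) ℝ} (hA : A.PosDef)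
    {G : Matrix (Fin n) (Fin k) ℝ} (hG : Gᵀ * G = 1) :
    0 < Matrix.trace (Gᵀ * A * G) := by
  have hdiag : ∀ j, (Gᵀ * A * G) j j = (fun i => G i j) ⬝ᵥ (A *ᵥ fun i => G i j) := by
    intro j
    simp only [Matrix.mul_apply, dotProduct, Matrix.mulVec, Matrix.transpose_apply,
      Finset.sum_mul, Finset.mul_sum, dotProduct]
    rw [Finset.sum_comm]
    exact Finset.sum_congr rfl fun i _ => Finset.sum_congr rfl fun l _ => by ring
  have hcol : ∀ j : Fin k, (fun i => G i j) ≠ 0 := by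
    intro j hzero
    have h1 : (Gᵀ * G) j j = 1 := by rw [hG]; simp
    rw [Matrix.mul_apply] at h1
    simp only [Matrix.transpose_apply] at h1
    have : ∀ i, G i j = 0 := fun i => congrFun hzero i
    simp [this] at h1
  rw [Matrix.trace]
  apply Finset.sum_pos
  · intro j _
    have := hA.dotProduct_mulVec_pos (hcol j)
    rw [star_triv] at this
    rw [Matrix.diag, hdiag j]
    exact this
  · exact ⟨⟨0, hk⟩, Finset.mem_univ _⟩

lemma sum_eigenvalues_eq_trace {k : ℕ} {B : Matrix (Fin k) (Fin k) ℝ} (hB : B.IsHermitian) :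
    ∑ i, hB.eigenvalues i = Matrix.trace B := by
  have h := hB.spectral_theorem
  have h2 := congrArg Matrix.trace h
  rw [Unitary.conjStarAlgAut_apply, Matrix.trace_mul_cycle] at h2
  rw [h2, mul_assoc, ← mul_assoc, Unitary.coe_star_mul_self hB.eigenvectorUnitary, one_mul,
    trace_diagonal]
  simp [RCLike.ofReal_real_eq_id]

lemma rayleigh_inf_le {k : ℕ} (hk : 0 < k) {B : Matrix (Fin k) (Fin k) ℝ} (hB : B.IsHermitian)
    (x : Fin k → ℝ) :
    (⨅ j, hB.eigenvalues j) * (x ⬝ᵥ x) ≤ x ⬝ᵥ (B *ᵥ x) := by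
  haveI : Nonempty (Fin k) := ⟨⟨0, hk⟩⟩
  set U := (hB.eigenvectorUnitary : Matrix (Fin k) (Fin k) ℝ) with hUdef
  set y := star U *ᵥ x with hy
  have hUT : Uᵀ = star U := by
    rw [Matrix.star_eq_conjTranspose, Matrix.conjTranspose_eq_transpose_of_trivial]
  have hx_eq : x ⬝ᵥ (B *ᵥ x) = ∑ j, hB.eigenvalues j * (y j)^2 := by
    conv_lhs => rw [hB.spectral_theorem, Unitary.conjStarAlgAut_apply]
    rw [← hUdef, ← mulVec_mulVec, ← mulVec_mulVec, dotProduct_mulVec x U, ← mulVec_transpose,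
      hUT, ← hy, dotProduct]
    refine Finset.sum_congr rfl fun j _ => ?_
    rw [Matrix.mulVec_diagonal]
    simp [RCLike.ofReal_real_eq_id]
    ring
  have hxx : x ⬝ᵥ x = ∑ j, (y j)^2 := by
    have h1 : y ⬝ᵥ y = x ⬝ᵥ x := by
      rw [hy, mulVec_dot]
      have h2 : (star U)ᵀ = U := by
        rw [Matrix.star_eq_conjTranspose, Matrix.conjTranspose_eq_transpose_of_trivial,
          Matrix.transpose_transpose]
      rw [h2, mulVec_mulVec,
        (Matrix.mem_unitaryGroup_iff).mp (hB.eigenvectorUnitary).2, one_mulVec]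
    rw [← h1, dotProduct]
    exact Finset.sum_congr rfl fun j _ => by ring
  rw [hx_eq, hxx, Finset.mul_sum]
  refine Finset.sum_le_sum fun j _ => ?_
  have h3 : (⨅ i, hB.eigenvalues i) ≤ hB.eigenvalues j :=
    ciInf_le (Set.Finite.bddBelow (Set.finite_range _)) j
  exact mul_le_mul_of_nonneg_right h3 (sq_nonneg _)


lemma quartic_nonpos {c₁ c₂ c₃ c₄ δ : ℝ} (hδ : 0 < δ)
    (h : ∀ t : ℝ, |t| < δ → c₁*t + c₂*t^2 + c₃*t^3 + c₄*t^4 ≤ 0) :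
    c₁ = 0 ∧ c₂ ≤ 0 := by
  have hf : Continuous fun t : ℝ => c₁ + c₂*t + c₃*t^2 + c₄*t^3 := by continuity
  have key : ∀ t : ℝ, |t| < δ → t ≠ 0 → t * (c₁ + c₂*t + c₃*t^2 + c₄*t^3) ≤ 0 := by
    intro t ht _
    have := h t ht
    nlinarith [this]
  have hright : ∀ t : ℝ, t ∈ Set.Ioo (0:ℝ) δ → c₁ + c₂*t + c₃*t^2 + c₄*t^3 ≤ 0 := by
    intro t ht
    have hk := key t (by rw [abs_of_pos ht.1]; exact ht.2) (ne_of_gt ht.1)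
    nlinarith [ht.1]
  have hleft : ∀ t : ℝ, t ∈ Set.Ioo (-δ) (0:ℝ) → 0 ≤ c₁ + c₂*t + c₃*t^2 + c₄*t^3 := by
    intro t ht
    have habs : |t| < δ := by rw [abs_of_neg ht.2]; linarith [ht.1]
    have hk := key t habs (ne_of_lt ht.2)
    nlinarith [ht.2]
  have ht1 : Filter.Tendsto (fun t : ℝ => c₁ + c₂*t + c₃*t^2 + c₄*t^3) (nhdsWithin 0 (Set.Ioi 0))
      (nhds c₁) := by
    have := hf.continuousAt (x := (0:ℝ))
    have h0 : c₁ + c₂*0 + c₃*0^2 + c₄*0^3 = c₁ := by ring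
    rw [ContinuousAt, h0] at this
    exact this.mono_left nhdsWithin_le_nhds
  have ht2 : Filter.Tendsto (fun t : ℝ => c₁ + c₂*t + c₃*t^2 + c₄*t^3) (nhdsWithin 0 (Set.Iio 0))
      (nhds c₁) := by
    have := hf.continuousAt (x := (0:ℝ))
    have h0 : c₁ + c₂*0 + c₃*0^2 + c₄*0^3 = c₁ := by ring
    rw [ContinuousAt, h0] at this
    exact this.mono_left nhdsWithin_le_nhds
  have hc1le : c₁ ≤ 0 := by
    refine le_of_tendsto ht1 ?_
    filter_upwards [Ioo_mem_nhdsGT_of_mem ⟨le_refl (0:ℝ), hδ⟩] with t ht using hright t ht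
  have hc1ge : 0 ≤ c₁ := by
    refine ge_of_tendsto ht2 ?_
    filter_upwards [Ioo_mem_nhdsLT_of_mem ⟨neg_lt_zero.mpr hδ, le_refl (0:ℝ)⟩] with t ht
      using hleft t ht
  have hc1 : c₁ = 0 := le_antisymm hc1le hc1ge
  refine ⟨hc1, ?_⟩
  have hg : Continuous fun t : ℝ => c₂ + c₃*t + c₄*t^2 := by continuity
  have hgright : ∀ t : ℝ, t ∈ Set.Ioo (0:ℝ) δ → c₂ + c₃*t + c₄*t^2 ≤ 0 := by
    intro t ht
    have := h t (by rw [abs_of_pos ht.1]; exact ht.2)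
    rw [hc1] at this
    nlinarith [this, mul_pos ht.1 ht.1]
  have ht3 : Filter.Tendsto (fun t : ℝ => c₂ + c₃*t + c₄*t^2) (nhdsWithin 0 (Set.Ioi 0))
      (nhds c₂) := by
    have := hg.continuousAt (x := (0:ℝ))
    have h0 : c₂ + c₃*0 + c₄*0^2 = c₂ := by ring
    rw [ContinuousAt, h0] at this
    exact this.mono_left nhdsWithin_le_nhds
  refine le_of_tendsto ht3 ?_
  filter_upwards [Ioo_mem_nhdsGT_of_mem ⟨le_refl (0:ℝ), hδ⟩] with t ht using hgright t ht




section MainLemma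

variable {n k : ℕ} {A : Matrix (Fin n) (Fin n) ℝ} {D G : Matrix (Fin n) (Fin k) ℝ}

set_option maxHeartbeats 2000000 in
/-- First- and second-order conditions at a local maximizer, along the curve rotating
`G *ᵥ c` towards `v`. -/
lemma local_max_conditions (hk : 0 < k) (hA : A.PosDef)
    (htr : Matrix.trace (Gᵀ * D) ≠ 0)
    (hloc : IsLocalMaxEta A D G)
    {v : Fin n → ℝ} (hv : v ⬝ᵥ v = 1) (hGv : Gᵀ *ᵥ v = 0)
    {c : Fin k → ℝ} (hc : c ⬝ᵥ c = 1) :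
    Matrix.trace (Gᵀ * A * G) * (v ⬝ᵥ (D *ᵥ c))
        = Matrix.trace (Gᵀ * D) * (v ⬝ᵥ (A *ᵥ (G *ᵥ c))) ∧
      Matrix.trace (Gᵀ * A * G) * (v ⬝ᵥ (D *ᵥ c)) ^ 2
        - Matrix.trace (Gᵀ * D) * Matrix.trace (Gᵀ * A * G) * ((G *ᵥ c) ⬝ᵥ (D *ᵥ c))
        - Matrix.trace (Gᵀ * D) ^ 2
            * ((v ⬝ᵥ (A *ᵥ v)) - (G *ᵥ c) ⬝ᵥ (A *ᵥ (G *ᵥ c))) ≤ 0 := by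
  obtain ⟨hG, ε, hε, hmax⟩ := hloc
  have hAT : Aᵀ = A := by
    have := hA.1
    rwa [Matrix.IsHermitian, Matrix.conjTranspose_eq_transpose_of_trivial] at this
  set p := Matrix.trace (Gᵀ * D) with hp
  set q := Matrix.trace (Gᵀ * A * G) with hq
  have hqpos : 0 < q := trace_quad_pos hk hA hG
  set a := v ⬝ᵥ (D *ᵥ c) with ha
  set b := (G *ᵥ c) ⬝ᵥ (D *ᵥ c) with hb
  set g := (G *ᵥ c) ⬝ᵥ (A *ᵥ (G *ᵥ c)) with hg
  set h := v ⬝ᵥ (A *ᵥ (G *ᵥ c)) with hh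
  set m := v ⬝ᵥ (A *ᵥ v) with hm
  have key : ∀ t : ℝ, |t| < ε / 2 →
      (4*(p*q*a - p^2*h))*t + (4*(q*a^2 - p*q*b - p^2*(m-g)))*t^2
        + (4*q*a*(p-2*b) + 4*p^2*h)*t^3 + (q*(p-2*b)^2 - p^2*q)*t^4 ≤ 0 := by
    intro t ht
    have ht2 : (0:ℝ) < 1 + t^2 := by positivity
    set C : ℝ := -2*t^2/(1+t^2) with hC
    set s : ℝ := 2*t/(1+t^2) with hs
    have hcs : 2 * C + C ^ 2 + s ^ 2 = 0 := by
      rw [hC, hs]; field_simp; ring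
    set Γ := G + vecMulVec (C • (G *ᵥ c) + s • v) c with hΓ
    have horth : Γᵀ * Γ = 1 := curve_orthonormal C s hG hv hGv hc hcs
    have hfrob : frobNorm (Γ - G) < ε := by
      have hΓG : Γ - G = vecMulVec (C • (G *ᵥ c) + s • v) c := by
        rw [hΓ]; abel
      have hsum : (∑ i, ∑ j, ((Γ - G) i j)^2)
          = ((C • (G *ᵥ c) + s • v) ⬝ᵥ (C • (G *ᵥ c) + s • v)) * (c ⬝ᵥ c) := by
        rw [hΓG]
        simp only [vecMulVec_apply, dotProduct]
        rw [Finset.sum_mul_sum]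
        exact Finset.sum_congr rfl fun i _ => Finset.sum_congr rfl fun j _ => by ring
      have hww : ((C • (G *ᵥ c) + s • v) ⬝ᵥ (C • (G *ᵥ c) + s • v)) = C^2 + s^2 :=
        w_dot_w C s hG hv hGv hc
      have hval : (∑ i, ∑ j, ((Γ - G) i j)^2) = 4*t^2/(1+t^2) := by
        rw [hsum, hww, hc, mul_one, hC, hs]; field_simp; ring
      rw [frobNorm, hval]
      have hlt : 4*t^2/(1+t^2) < ε^2 := by
        have h1 : 4*t^2/(1+t^2) ≤ 4*t^2 := by
          apply div_le_self (by positivity)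
          nlinarith [sq_nonneg t]
        have h2 : 4*t^2 < ε^2 := by
          have : t^2 < (ε/2)^2 := by
            have := abs_lt.mp ht
            nlinarith [this.1, this.2]
          nlinarith [this]
        linarith
      exact (Real.sqrt_lt' hε).mpr hlt
    have hη := hmax Γ horth hfrob
    rw [eta, eta, hΓ, trace_lin_curve C s hGv hc,
      trace_quad_curve C s hG hv hGv hc hAT hcs] at hη
    rw [← hp, ← hq, ← ha, ← hb, ← hg, ← hh, ← hm] at hη
    set pt := p + b * C + a * s with hpt
    set qt := q + (m - g) * s^2 + 2*h*(s*(1+C)) with hqt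
    have hqtpos : 0 < qt := by
      have := trace_quad_pos hk hA horth
      rw [hΓ, trace_quad_curve C s hG hv hGv hc hAT hcs, ← hq, ← hg, ← hh, ← hm] at this
      exact this
    have hineq : pt^2 * q ≤ p^2 * qt := by
      rw [div_le_div_iff₀ hqtpos hqpos] at hη
      exact hη
    have hident : (4*(p*q*a - p^2*h))*t + (4*(q*a^2 - p*q*b - p^2*(m-g)))*t^2
        + (4*q*a*(p-2*b) + 4*p^2*h)*t^3 + (q*(p-2*b)^2 - p^2*q)*t^4
        = (1+t^2)^2 * (pt^2 * q - p^2 * qt) := by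
      rw [hpt, hqt, hC, hs]
      field_simp
      ring
    rw [hident]
    apply mul_nonpos_of_nonneg_of_nonpos (by positivity)
    linarith
  have hquart := quartic_nonpos (half_pos hε) key
  constructor
  · have h1 := hquart.1
    have h2 : (4*p) * (q*a - p*h) = 0 := by linear_combination h1
    rcases mul_eq_zero.mp h2 with h3 | h3
    · exact absurd (by linarith : p = 0) htr
    · linarith
  · linarith [hquart.2]

end MainLemma

section FirstOrder

lemma mulVec_col {a b c : ℕ} (M : Matrix (Fin a) (Fin b) ℝ) (N : Matrix (Fin b) (Fin c) ℝ)
    (j : Fin c) : (M *ᵥ fun i => N i j) = fun l => (M * N) l j := by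
  funext l; simp [Matrix.mulVec, Matrix.mul_apply, dotProduct]

lemma unit_of_norm {m : ℕ} (x : EuclideanSpace ℝ (Fin m)) (hx : ‖x‖ = 1) :
    (⇑x : Fin m → ℝ) ⬝ᵥ ⇑x = 1 := by
  have h : (inner ℝ x x : ℝ) = 1 := by
    rw [real_inner_self_eq_norm_sq, hx]; norm_num
  rw [← h]
  simp [PiLp.inner_apply, dotProduct, RCLike.inner_apply, mul_comm]
  rw [EuclideanSpace.norm_eq, Real.sq_sqrt (by positivity)]
  simp [sq]

end FirstOrder


end StiefelAux

namespace StiefelAux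

section PartOne

variable {n k : ℕ} {A : Matrix (Fin n) (Fin n) ℝ} {D G : Matrix (Fin n) (Fin k) ℝ}

lemma first_order_matrix (hk : 0 < k) (hA : A.PosDef)
    (htr : Matrix.trace (Gᵀ * D) ≠ 0) (hloc : IsLocalMaxEta A D G) :
    A * G - xi A D G • D = G * (Gᵀ * (A * G - xi A D G • D)) := by
  have hG : Gᵀ * G = 1 := hloc.1
  set p := Matrix.trace (Gᵀ * D) with hp
  set q := Matrix.trace (Gᵀ * A * G) with hq
  have hxi : xi A D G * p = q := div_mul_cancel₀ _ htr
  set ξ := xi A D G with hξdef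
  set R := A * G - ξ • D with hR
  set N := R - G * (Gᵀ * R) with hN
  have hGN : Gᵀ * N = 0 := by
    rw [hN, Matrix.mul_sub, ← Matrix.mul_assoc, ← Matrix.mul_assoc, hG, Matrix.one_mul, sub_self]
  have hNzero : N = 0 := by
    by_contra hNne
    have hcolex : ∃ j : Fin k, (fun i => N i j) ≠ 0 := by
      by_contra hall
      push_neg at hall
      apply hNne
      ext i j
      exact congrFun (hall j) i
    obtain ⟨j, hj⟩ := hcolex
    set z := fun i => N i j with hz
    have hzz : 0 < z ⬝ᵥ z := by
      rcases Function.ne_iff.mp hj with ⟨i0, hi0⟩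
      have hterm : 0 < z i0 * z i0 := mul_self_pos.mpr hi0
      exact Finset.sum_pos' (fun i _ => mul_self_nonneg _) ⟨i0, Finset.mem_univ _, hterm⟩
    set r := Real.sqrt (z ⬝ᵥ z) with hr
    have hrpos : 0 < r := Real.sqrt_pos.mpr hzz
    have hr2 : r ^ 2 = z ⬝ᵥ z := Real.sq_sqrt hzz.le
    set v := r⁻¹ • z with hv
    have hvv : v ⬝ᵥ v = 1 := by
      rw [hv, smul_dotProduct, dotProduct_smul, smul_eq_mul, smul_eq_mul, ← hr2]
      field_simp
    have hGz : Gᵀ *ᵥ z = 0 := by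
      rw [hz, mulVec_col, hGN]
      rfl
    have hGv : Gᵀ *ᵥ v = 0 := by
      rw [hv, mulVec_smul, hGz, smul_zero]
    have hc : (Pi.single j (1:ℝ)) ⬝ᵥ (Pi.single j 1) = 1 := by
      simp [dotProduct, Pi.single_apply]
    have h1 := (local_max_conditions hk hA htr hloc hvv hGv hc).1
    rw [← hp, ← hq] at h1
    have hDc : D *ᵥ Pi.single j 1 = fun i => D i j := by
      funext i; simp [mulVec_single]
    have hAGc : A *ᵥ (G *ᵥ Pi.single j 1) = fun i => (A * G) i j := by
      rw [mulVec_mulVec]; funext i; simp [mulVec_single]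
    rw [hDc, hAGc] at h1
    have hvR : v ⬝ᵥ (fun i => R i j) = 0 := by
      have e : (fun i => R i j) = (fun i => (A * G) i j) + (-ξ) • (fun i => D i j) := by
        funext i
        simp [hR, Matrix.sub_apply, Matrix.smul_apply]
        ring
      rw [e, dotProduct_add, dotProduct_smul, smul_eq_mul]
      have hp0 : p ≠ 0 := htr
      have : p * (v ⬝ᵥ (fun i => (A * G) i j) + -ξ * (v ⬝ᵥ fun i => D i j)) = 0 := by
        linear_combination (-1) * h1 + (-(v ⬝ᵥ fun i => D i j)) * hxi
      rcases mul_eq_zero.mp this with h' | h'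
      · exact absurd h' hp0
      · exact h'
    have hvGR : v ⬝ᵥ (fun i => (G * (Gᵀ * R)) i j) = 0 := by
      have e : (fun i => (G * (Gᵀ * R)) i j) = G *ᵥ (fun l => (Gᵀ * R) l j) := by
        rw [mulVec_col]
      rw [e, dotProduct_comm, mulVec_dot, hGv, dotProduct_zero]
    have hvz : v ⬝ᵥ z = 0 := by
      have e : z = (fun i => R i j) - (fun i => (G * (Gᵀ * R)) i j) := by
        funext i; simp [hz, hN, Matrix.sub_apply]
      rw [e, dotProduct_sub, hvR, hvGR, sub_zero]
    rw [hv, smul_dotProduct, smul_eq_mul] at hvz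
    rcases mul_eq_zero.mp hvz with h' | h'
    · exact absurd h' (inv_ne_zero hrpos.ne')
    · exact absurd h' hzz.ne'
  have : R = G * (Gᵀ * R) := by
    have h0 : R - G * (Gᵀ * R) = 0 := hNzero
    rwa [sub_eq_zero] at h0
  exact this

lemma part_one (hk : 0 < k) (hA : A.PosDef)
    (htr : Matrix.trace (Gᵀ * D) ≠ 0) (hloc : IsLocalMaxEta A D G) :
    Emat A D G * G = G * (Gᵀ * Emat A D G * G) := by
  have hG : Gᵀ * G = 1 := hloc.1
  have key := first_order_matrix hk hA htr hloc
  set ξ := xi A D G with hξdef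
  have e1 : Emat A D G * G = (A * G - ξ • D) - ξ • (G * (Dᵀ * G)) := by
    rw [Emat, Matrix.sub_mul, Matrix.smul_mul, Matrix.add_mul, Matrix.mul_assoc D Gᵀ G, hG,
      Matrix.mul_one, Matrix.mul_assoc, smul_add]
    abel
  have e2 : G * (Gᵀ * Emat A D G * G) = G * (Gᵀ * (A * G - ξ • D)) - ξ • (G * (Dᵀ * G)) := by
    have i0 : Gᵀ * Emat A D G * G
        = Gᵀ * A * G - ξ • (Gᵀ * D * (Gᵀ * G)) - ξ • (Gᵀ * G * (Dᵀ * G)) := by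
      rw [Emat]
      simp only [Matrix.sub_mul, Matrix.mul_sub, Matrix.smul_mul, Matrix.mul_smul,
        Matrix.add_mul, Matrix.mul_add, smul_add, Matrix.mul_assoc]
      abel
    have i1 : Gᵀ * Emat A D G * G = Gᵀ * (A * G - ξ • D) - ξ • (Dᵀ * G) := by
      rw [i0, hG, Matrix.mul_one, Matrix.one_mul, Matrix.mul_sub, Matrix.mul_smul,
        Matrix.mul_assoc]
    rw [i1, Matrix.mul_sub, Matrix.mul_smul]
  rw [e1, e2, ← key]

end PartOne

end StiefelAux

/-- at a local maximizer `G` of `η` on `𝕆^{n×k}` (with `tr(GᵀD) ≠ 0`), the range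
of `G` is an eigenspace of `E(G)`, i.e. `E(G)G = G(GᵀE(G)G)`, and the smallest eigenvalue of
`GᵀE(G)G` is at most `μ_k`, where `μ₁ ≤ … ≤ μ_n` are the eigenvalues of `E(G)` arranged in
nondecreasing order (with multiplicity). -/
theorem eigenspace_of_localMax
    (n k : ℕ) (hk1 : 1 ≤ k) (hkn : k < n)
    (A : Matrix (Fin n) (Fin n) ℝ) (hA : A.PosDef)
    (D : Matrix (Fin n) (Fin k) ℝ)
    (G : Matrix (Fin n) (Fin k) ℝ)
    (htr : Matrix.trace (Gᵀ * D) ≠ 0)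
    (hloc : IsLocalMaxEta A D G)
    (μ : Fin n → ℝ) (hμmono : Monotone μ)
    (hμ : ∃ σ : Equiv.Perm (Fin n), μ = (Emat_isHermitian hA.1 D G).eigenvalues ∘ σ) :
    Emat A D G * G = G * (Gᵀ * Emat A D G * G) ∧
      (⨅ j : Fin k,
          (transpose_mul_mul_isHermitian (Emat_isHermitian hA.1 D G) G).eigenvalues j) ≤
        μ ⟨k - 1, by omega⟩ := by
  classical
  have hk : 0 < k := hk1
  have hG : Gᵀ * G = 1 := hloc.1
  have part1 := StiefelAux.part_one hk hA htr hloc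
  refine ⟨part1, ?_⟩
  by_contra hcon
  push_neg at hcon
  set p := Matrix.trace (Gᵀ * D) with hp
  set q := Matrix.trace (Gᵀ * A * G) with hq
  have hqpos : 0 < q := StiefelAux.trace_quad_pos hk hA hG
  have hxi : xi A D G * p = q := div_mul_cancel₀ _ htr
  set ξ := xi A D G with hξdef
  set hE := Emat_isHermitian hA.1 D G with hEdef
  set hMh := transpose_mul_mul_isHermitian hE G with hMhdef
  set lam := ⨅ j : Fin k, hMh.eigenvalues j with hlam
  have hET : (Emat A D G)ᵀ = Emat A D G := by
    have := hE
    rwa [Matrix.IsHermitian, Matrix.conjTranspose_eq_transpose_of_trivial] at this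
  have hMT : (Gᵀ * Emat A D G * G)ᵀ = Gᵀ * Emat A D G * G := by
    have := hMh
    rwa [Matrix.IsHermitian, Matrix.conjTranspose_eq_transpose_of_trivial] at this
  obtain ⟨σ, hσ⟩ := hμ
  set i0 : Fin n := σ ⟨0, by omega⟩ with hi0
  set v : Fin n → ℝ := ⇑(hE.eigenvectorBasis i0) with hvdef
  set μ0 := hE.eigenvalues i0 with hμ0def
  have hEv : Emat A D G *ᵥ v = μ0 • v := hE.mulVec_eigenvectorBasis i0
  have hμ0eq : μ ⟨0, by omega⟩ = μ0 := by rw [hσ]; rfl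
  have hμ0le : μ0 ≤ μ ⟨k - 1, by omega⟩ := by
    rw [← hμ0eq]
    exact hμmono (by exact Fin.mk_le_mk.mpr (Nat.zero_le _))
  have hvunit : v ⬝ᵥ v = 1 :=
    StiefelAux.unit_of_norm _ (hE.eigenvectorBasis.orthonormal.1 i0)
  -- Gᵀ v = 0
  have hGv : Gᵀ *ᵥ v = 0 := by
    by_contra hx
    set x := Gᵀ *ᵥ v with hxdef
    have hMx : (Gᵀ * Emat A D G * G) *ᵥ x = μ0 • x := by
      have h1 : (Gᵀ * Emat A D G * G) * Gᵀ = Gᵀ * Emat A D G := by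
        have h2 := congrArg Matrix.transpose part1
        rw [Matrix.transpose_mul, Matrix.transpose_mul, hET, hMT] at h2
        exact h2.symm
      rw [hxdef, mulVec_mulVec, h1, ← mulVec_mulVec, hEv, mulVec_smul]
    have hxx : 0 < x ⬝ᵥ x := by
      rcases Function.ne_iff.mp hx with ⟨l, hl⟩
      exact Finset.sum_pos' (fun i _ => mul_self_nonneg _)
        ⟨l, Finset.mem_univ _, mul_self_pos.mpr hl⟩
    have hray := StiefelAux.rayleigh_inf_le hk hMh x
    rw [hMx, dotProduct_smul, smul_eq_mul] at hray
    have hlamle : lam ≤ μ0 := le_of_mul_le_mul_right (by rw [hlam]; exact hray) hxx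
    have : lam ≤ μ ⟨k - 1, by omega⟩ := le_trans hlamle hμ0le
    exact absurd this (not_le.mpr hcon)
  -- m = μ0
  have hm : v ⬝ᵥ (A *ᵥ v) = μ0 := by
    have hAeq : A = Emat A D G + ξ • (D * Gᵀ + G * Dᵀ) := by
      rw [Emat, ← hξdef]
      abel
    rw [hAeq, Matrix.add_mulVec, Matrix.smul_mulVec, Matrix.add_mulVec,
      dotProduct_add, hEv, dotProduct_smul, dotProduct_smul, smul_eq_mul, smul_eq_mul,
      hvunit, ← mulVec_mulVec, hGv, mulVec_zero, ← mulVec_mulVec]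
    have h2 : v ⬝ᵥ (G *ᵥ (Dᵀ *ᵥ v)) = 0 := by
      rw [dotProduct_comm, StiefelAux.mulVec_dot, hGv, dotProduct_zero]
    rw [dotProduct_add, dotProduct_zero, h2]
    ring
  -- choose c as an eigenvector of the symmetric part of GᵀD
  set S := (1/2 : ℝ) • (Gᵀ * D + (Gᵀ * D)ᵀ) with hSdef
  have hSh : S.IsHermitian := by
    rw [Matrix.IsHermitian, Matrix.conjTranspose_eq_transpose_of_trivial, hSdef,
      Matrix.transpose_smul, Matrix.transpose_add, Matrix.transpose_transpose, add_comm]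
  have htrS : Matrix.trace S = p := by
    rw [hSdef, Matrix.trace_smul, Matrix.trace_add, Matrix.trace_transpose, ← hp]
    simp
    ring
  have hsum : ∑ i, p * hSh.eigenvalues i = p ^ 2 := by
    rw [← Finset.mul_sum, StiefelAux.sum_eigenvalues_eq_trace hSh, htrS]
    ring
  have hp2 : 0 < p ^ 2 := lt_of_le_of_ne (sq_nonneg p) (Ne.symm (pow_ne_zero 2 htr))
  have hex : ∃ i, 0 < p * hSh.eigenvalues i := by
    by_contra hno
    push_neg at hno
    have : ∑ i, p * hSh.eigenvalues i ≤ 0 :=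
      Finset.sum_nonpos fun i _ => hno i
    rw [hsum] at this
    linarith
  obtain ⟨i1, hpb0⟩ := hex
  set c : Fin k → ℝ := ⇑(hSh.eigenvectorBasis i1) with hcdef
  have hcunit : c ⬝ᵥ c = 1 :=
    StiefelAux.unit_of_norm _ (hSh.eigenvectorBasis.orthonormal.1 i1)
  have hSc : S *ᵥ c = hSh.eigenvalues i1 • c := hSh.mulVec_eigenvectorBasis i1
  set b := (G *ᵥ c) ⬝ᵥ (D *ᵥ c) with hbdef
  have hbval : b = hSh.eigenvalues i1 := by
    have e1 : b = c ⬝ᵥ ((Gᵀ * D) *ᵥ c) := by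
      rw [hbdef, StiefelAux.mulVec_dot, mulVec_mulVec]
    have e2 : c ⬝ᵥ ((Gᵀ * D)ᵀ *ᵥ c) = c ⬝ᵥ ((Gᵀ * D) *ᵥ c) := by
      rw [dotProduct_comm, StiefelAux.mulVec_dot, transpose_transpose]
    have e3 : c ⬝ᵥ (S *ᵥ c) = c ⬝ᵥ ((Gᵀ * D) *ᵥ c) := by
      rw [hSdef, Matrix.smul_mulVec, Matrix.add_mulVec, dotProduct_smul,
        dotProduct_add, e2, smul_eq_mul]
      ring
    rw [e1, ← e3, hSc, dotProduct_smul, smul_eq_mul, hcunit, mul_one]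
  have hpb : 0 < p * b := by rw [hbval]; exact hpb0
  -- g = c M' c + 2 ξ b
  set cMc := c ⬝ᵥ ((Gᵀ * Emat A D G * G) *ᵥ c) with hcMc
  have hgval : (G *ᵥ c) ⬝ᵥ (A *ᵥ (G *ᵥ c)) = cMc + 2 * ξ * b := by
    have hGu : Gᵀ *ᵥ (G *ᵥ c) = c := by rw [mulVec_mulVec, hG, one_mulVec]
    have e1 : cMc = (G *ᵥ c) ⬝ᵥ (Emat A D G *ᵥ (G *ᵥ c)) := by
      rw [hcMc, ← mulVec_mulVec, ← mulVec_mulVec, dotProduct_comm, StiefelAux.mulVec_dot,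
        transpose_transpose, dotProduct_comm]
    have e2 : (G *ᵥ c) ⬝ᵥ ((D * Gᵀ) *ᵥ (G *ᵥ c)) = b := by
      rw [← mulVec_mulVec, hGu, hbdef, dotProduct_comm]
    have e3 : (G *ᵥ c) ⬝ᵥ ((G * Dᵀ) *ᵥ (G *ᵥ c)) = b := by
      rw [← mulVec_mulVec, dotProduct_comm, StiefelAux.mulVec_dot, hGu,
        StiefelAux.mulVec_dot, transpose_transpose, hbdef]
    rw [e1, Emat, ← hξdef, Matrix.sub_mulVec, Matrix.smul_mulVec, Matrix.add_mulVec,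
      dotProduct_sub, dotProduct_smul, dotProduct_add, e2, e3, smul_eq_mul]
    ring
  -- Rayleigh for c
  have hray2 := StiefelAux.rayleigh_inf_le hk hMh c
  rw [hcunit, mul_one, ← hcMc, ← hlam] at hray2
  -- second-order condition
  have hso := (StiefelAux.local_max_conditions hk hA htr hloc hvunit hGv hcunit).2
  rw [← hp, ← hq, hm, hgval, ← hbdef] at hso
  set a := v ⬝ᵥ (D *ᵥ c) with hadef
  have hxib : p ^ 2 * (2 * ξ * b) = 2 * p * q * b := by
    rw [← hxi]; ring
  have f1 : 0 < q * (p * b) := mul_pos hqpos hpb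
  have f2 : 0 ≤ q * a ^ 2 := mul_nonneg hqpos.le (sq_nonneg a)
  have f3 : 0 < p ^ 2 * (cMc - μ0) := by
    apply mul_pos hp2
    have : μ0 < lam := lt_of_le_of_lt hμ0le hcon
    linarith
  nlinarith [hso, hxib, f1, f2, f3]
end

section
/- Let G, Ĝ ∈ 𝕆^{n×k} with tr(GᵀD) > 0. If ĜᵀD = DᵀĜ and ĜᵀD is positive semidefinite, and tr(Ĝᵀ E(G) Ĝ) ≤ tr(Gᵀ E(G) G), then η(Ĝ) ≥ η(G). -/
open Matrix

/-- Auxiliary: positivity of quadratic trace form. -/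
lemma trace_form_pos {n k : ℕ} (hk : 1 ≤ k) (A : Matrix (Fin n) (Fin n) ℝ) (hA : A.PosDef)
    (G : Matrix (Fin n) (Fin k) ℝ) (hG : Gᵀ * G = 1) :
    0 < Matrix.trace (Gᵀ * A * G) := by
  have hct : Gᴴ = Gᵀ := by ext i j; simp [conjTranspose_apply]
  have hPD : (Gᵀ * A * G).PosDef := by
    refine posDef_iff_dotProduct_mulVec.mpr ⟨?_, ?_⟩
    · have := isHermitian_conjTranspose_mul_mul G hA.1
      rwa [hct] at this
    · intro x hx
      have hGx : G *ᵥ x ≠ 0 := by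
        intro h0
        apply hx
        have : (Gᵀ * G) *ᵥ x = Gᵀ *ᵥ (G *ᵥ x) := by rw [mulVec_mulVec]
        rw [hG, one_mulVec, h0, mulVec_zero] at this
        exact this
      have := (posDef_iff_dotProduct_mulVec.mp hA).2 hGx
      simpa only [star_mulVec, dotProduct_mulVec, vecMul_vecMul, hct, mul_assoc] using this
  have hdiag : ∀ i, 0 < (Gᵀ * A * G) i i := by
    intro i
    have := (posDef_iff_dotProduct_mulVec.mp hPD).2 (x := Pi.single i 1) (by intro h; simpa using congrFun h i)
    simpa [dotProduct, mulVec, Pi.single_apply] using this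
  have : Nonempty (Fin k) := ⟨⟨0, hk⟩⟩
  exact Finset.sum_pos (fun i _ => hdiag i) Finset.univ_nonempty

lemma trace_as_sum {n k : ℕ} (X Y : Matrix (Fin n) (Fin k) ℝ) :
    Matrix.trace (Xᵀ * Y) = ∑ p : Fin n × Fin k, X p.1 p.2 * Y p.1 p.2 := by
  rw [Fintype.sum_prod_type]
  simp only [Matrix.trace, Matrix.mul_apply, Matrix.diag, Matrix.transpose_apply]
  exact Finset.sum_comm

lemma final_arith (a b s t x c : ℝ) (ha : 0 < a) (hb : 0 < b) (htr : 0 < t) (hs0 : 0 ≤ s)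
    (hxit : x * t = b) (hx : 0 < x) (hcls : c ≤ s)
    (hle : a - x * (c + c) ≤ b - x * (t + t)) : t ^ 2 / b ≤ s ^ 2 / a := by
  have hkey : a + b ≤ 2 * x * s := by nlinarith
  have h5 : 4 * (a * b) ≤ (a + b) ^ 2 := by nlinarith [sq_nonneg (a - b)]
  have hab : 0 ≤ a + b := by linarith
  have h6 : (a + b) ^ 2 ≤ (2 * x * s) ^ 2 := by
    have h2xs : 0 ≤ 2 * x * s := by positivity
    nlinarith
  have h67 : a * b ≤ x ^ 2 * s ^ 2 := by nlinarith
  have h7 : a * b * t ^ 2 ≤ b ^ 2 * s ^ 2 := by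
    calc a * b * t ^ 2 ≤ x ^ 2 * s ^ 2 * t ^ 2 :=
          mul_le_mul_of_nonneg_right h67 (sq_nonneg t)
      _ = (x * t) ^ 2 * s ^ 2 := by ring
      _ = b ^ 2 * s ^ 2 := by rw [hxit]
  have h8 : b * (t ^ 2 * a) ≤ b * (s ^ 2 * b) := by nlinarith
  have hfin : t ^ 2 * a ≤ s ^ 2 * b := le_of_mul_le_mul_left h8 hb
  rw [div_le_div_iff₀ hb ha]
  exact hfin


/-- if `tr(GᵀD) > 0`, `ĜᵀD = DᵀĜ` is positive semidefinite, and
`tr(ĜᵀE(G)Ĝ) ≤ tr(GᵀE(G)G)`, then `η(Ĝ) ≥ η(G)`. -/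
theorem eta_ge_of_trace_le
    (n k : ℕ) (hk1 : 1 ≤ k) (hkn : k < n)
    (A : Matrix (Fin n) (Fin n) ℝ) (hA : A.PosDef)
    (D : Matrix (Fin n) (Fin k) ℝ)
    (G Ghat : Matrix (Fin n) (Fin k) ℝ) (hG : Gᵀ * G = 1) (hGhat : Ghatᵀ * Ghat = 1)
    (htr : 0 < Matrix.trace (Gᵀ * D))
    (hsym : Ghatᵀ * D = Dᵀ * Ghat) (hpsd : (Ghatᵀ * D).PosSemidef)
    (hle : Matrix.trace (Ghatᵀ * Emat A D G * Ghat) ≤ Matrix.trace (Gᵀ * Emat A D G * G)) :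
    eta A D G ≤ eta A D Ghat := by
  set t : ℝ := Matrix.trace (Gᵀ * D) with ht_def
  set b : ℝ := Matrix.trace (Gᵀ * A * G) with hb_def
  set a : ℝ := Matrix.trace (Ghatᵀ * A * Ghat) with ha_def
  set s : ℝ := Matrix.trace (Ghatᵀ * D) with hs_def
  set c : ℝ := Matrix.trace (Gᵀ * Ghat * (Ghatᵀ * D)) with hc_def
  have hb : 0 < b := trace_form_pos hk1 A hA G hG
  have ha : 0 < a := trace_form_pos hk1 A hA Ghat hGhat
  have ht : t ≠ 0 := ne_of_gt htr
  have hxi : xi A D G = b / t := rfl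
  have hxit : xi A D G * t = b := by rw [hxi]; field_simp
  have hxipos : 0 < xi A D G := by rw [hxi]; positivity
  -- trace expansion at G
  have h1 : Matrix.trace (Gᵀ * (D * Gᵀ) * G) = t := by
    rw [← Matrix.mul_assoc Gᵀ D Gᵀ, Matrix.mul_assoc (Gᵀ * D) Gᵀ G, hG, Matrix.mul_one]
  have h2 : Matrix.trace (Gᵀ * (G * Dᵀ) * G) = t := by
    rw [← Matrix.mul_assoc Gᵀ G Dᵀ, hG, Matrix.one_mul,
      ← Matrix.trace_transpose (Dᵀ * G), Matrix.transpose_mul, Matrix.transpose_transpose]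
  have hEG : Matrix.trace (Gᵀ * Emat A D G * G) = b - xi A D G * (t + t) := by
    simp only [Emat, Matrix.mul_sub, Matrix.sub_mul, Matrix.mul_add, Matrix.add_mul,
      Matrix.mul_smul, Matrix.smul_mul, Matrix.trace_sub, Matrix.trace_add, Matrix.trace_smul,
      smul_eq_mul]
    rw [h1, h2]
    try ring
  -- trace expansion at Ghat
  have h3 : Matrix.trace (Ghatᵀ * (D * Gᵀ) * Ghat) = c := by
    rw [← Matrix.mul_assoc Ghatᵀ D Gᵀ, Matrix.mul_assoc (Ghatᵀ * D) Gᵀ Ghat,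
      Matrix.trace_mul_comm, hc_def, Matrix.mul_assoc]
  have h4 : Matrix.trace (Ghatᵀ * (G * Dᵀ) * Ghat) = c := by
    have e : Ghatᵀ * (G * Dᵀ) * Ghat = (Ghatᵀ * G) * (Ghatᵀ * D) := by
      rw [← Matrix.mul_assoc Ghatᵀ G Dᵀ, Matrix.mul_assoc (Ghatᵀ * G) Dᵀ Ghat, ← hsym]
    rw [e, ← Matrix.trace_transpose ((Ghatᵀ * G) * (Ghatᵀ * D)), Matrix.transpose_mul,
      Matrix.transpose_mul (Ghatᵀ) D, Matrix.transpose_mul (Ghatᵀ) G,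
      Matrix.transpose_transpose, ← hsym, Matrix.trace_mul_comm, hc_def]
  have hEGhat : Matrix.trace (Ghatᵀ * Emat A D G * Ghat) = a - xi A D G * (c + c) := by
    simp only [Emat, Matrix.mul_sub, Matrix.sub_mul, Matrix.mul_add, Matrix.add_mul,
      Matrix.mul_smul, Matrix.smul_mul, Matrix.trace_sub, Matrix.trace_add, Matrix.trace_smul,
      smul_eq_mul]
    rw [h3, h4]
    try ring
  -- Cauchy–Schwarz : c ≤ s
  have hs0 : 0 ≤ s := by
    have hdiag : ∀ i, 0 ≤ (Ghatᵀ * D) i i := by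
      intro i
      have := hpsd.dotProduct_mulVec_nonneg (Pi.single i 1)
      simpa [dotProduct, mulVec, Pi.single_apply] using this
    exact Finset.sum_nonneg fun i _ => hdiag i
  open scoped MatrixOrder in
  set R := CFC.sqrt (Ghatᵀ * D) with hR_def
  have hRR : R * R = Ghatᵀ * D := by
    open scoped MatrixOrder in exact CFC.sqrt_mul_sqrt_self _ hpsd.nonneg
  have hRsym : Rᵀ = R := by
    have h : R.IsHermitian := by
        open scoped MatrixOrder in exact (nonneg_iff_posSemidef.mp (CFC.sqrt_nonneg _)).isHermitian
    have hct : Rᴴ = Rᵀ := by ext i j; simp [conjTranspose_apply]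
    rw [← hct]; exact h
  have hXX : Matrix.trace ((G * R)ᵀ * (G * R)) = s := by
    rw [Matrix.transpose_mul, hRsym, Matrix.mul_assoc R Gᵀ (G * R),
      ← Matrix.mul_assoc Gᵀ G R, hG, Matrix.one_mul, hRR, hs_def]
  have hYY : Matrix.trace ((Ghat * R)ᵀ * (Ghat * R)) = s := by
    rw [Matrix.transpose_mul, hRsym, Matrix.mul_assoc R Ghatᵀ (Ghat * R),
      ← Matrix.mul_assoc Ghatᵀ Ghat R, hGhat, Matrix.one_mul, hRR, hs_def]
  have hXY : Matrix.trace ((G * R)ᵀ * (Ghat * R)) = c := by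
    rw [Matrix.transpose_mul, hRsym, Matrix.mul_assoc R Gᵀ (Ghat * R),
      ← Matrix.mul_assoc Gᵀ Ghat R, Matrix.trace_mul_comm, Matrix.mul_assoc, hRR, hc_def,
      Matrix.mul_assoc]
  have hcs : c ^ 2 ≤ s * s := by
    have := Finset.sum_mul_sq_le_sq_mul_sq Finset.univ
      (fun p : Fin n × Fin k => (G * R) p.1 p.2) (fun p : Fin n × Fin k => (Ghat * R) p.1 p.2)
    rw [← trace_as_sum] at this
    have e1 : (∑ p : Fin n × Fin k, ((G * R) p.1 p.2) ^ 2)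
        = Matrix.trace ((G * R)ᵀ * (G * R)) := by
      rw [trace_as_sum]; congr 1; ext p; ring
    have e2 : (∑ p : Fin n × Fin k, ((Ghat * R) p.1 p.2) ^ 2)
        = Matrix.trace ((Ghat * R)ᵀ * (Ghat * R)) := by
      rw [trace_as_sum]; congr 1; ext p; ring
    rw [e1, e2, hXX, hYY, hXY] at this
    exact this
  have hcls : c ≤ s := by nlinarith [sq_nonneg (s - c), sq_nonneg (s + c)]
  rw [hEG, hEGhat] at hle
  have hfin : t ^ 2 / b ≤ s ^ 2 / a :=
    final_arith a b s t (xi A D G) c ha hb htr hs0 hxit hxipos hcls hle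
  show t ^ 2 / b ≤ s ^ 2 / a
  exact hfin
end

section
/- Let G, Ĝ ∈ 𝕆^{n×k} with tr(GᵀD) > 0. If ĜᵀD = DᵀĜ and ĜᵀD is positive semidefinite, and the strict inequality tr(Ĝᵀ E(G) Ĝ) < tr(Gᵀ E(G) G) holds, then η(Ĝ) > η(G). -/
open Matrix

lemma trace_nonneg_of_psd {k : ℕ} {M : Matrix (Fin k) (Fin k) ℝ} (h : M.PosSemidef) :
    0 ≤ M.trace := by
  rw [Matrix.trace]
  refine Finset.sum_nonneg fun i _ => ?_
  have := h.dotProduct_mulVec_nonneg (Pi.single i 1)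
  simpa [dotProduct, Matrix.mulVec, Pi.single_apply, Finset.mul_sum,
    Matrix.diag] using this

lemma trace_conj_pos {n k : ℕ} (hk : 1 ≤ k) {A : Matrix (Fin n) (Fin n) ℝ} (hA : A.PosDef)
    {G : Matrix (Fin n) (Fin k) ℝ} (hG : Gᵀ * G = 1) :
    0 < Matrix.trace (Gᵀ * A * G) := by
  rw [Matrix.trace]
  have : Nonempty (Fin k) := ⟨⟨0, hk⟩⟩
  refine Finset.sum_pos (fun i _ => ?_) Finset.univ_nonempty
  have hcol : (fun j => G j i) ≠ 0 := by
    intro hz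
    have h1 : (Gᵀ * G) i i = (1 : Matrix (Fin k) (Fin k) ℝ) i i := by rw [hG]
    simp [Matrix.mul_apply, Matrix.one_apply] at h1
    have : ∀ x, G x i = 0 := fun x => congrFun hz x
    simp [this] at h1
  have := hA.dotProduct_mulVec_pos hcol
  have heq : (Gᵀ * A * G) i i = dotProduct (star (fun j => G j i)) (A *ᵥ (fun j => G j i)) := by
    simp only [Matrix.mul_apply, dotProduct, Matrix.mulVec, Matrix.transpose_apply,
      star_trivial, Matrix.diag]
    simp only [Finset.sum_mul, Finset.mul_sum]
    rw [Finset.sum_comm]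
    exact Finset.sum_congr rfl fun x _ => Finset.sum_congr rfl fun y _ => by ring
  rw [Matrix.diag]
  rw [heq]
  exact this

lemma trace_prod_le {n k : ℕ} {S : Matrix (Fin k) (Fin k) ℝ} (hS : S.PosSemidef)
    (hSsym : Sᵀ = S) {G Ghat : Matrix (Fin n) (Fin k) ℝ}
    (hG : Gᵀ * G = 1) (hGhat : Ghatᵀ * Ghat = 1) :
    Matrix.trace (S * (Gᵀ * Ghat)) ≤ Matrix.trace S := by
  have hct : (G - Ghat)ᴴ = (G - Ghat)ᵀ := by
    ext i j; simp [Matrix.conjTranspose_apply]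
  have hp : ((G - Ghat) * S * (G - Ghat)ᵀ).PosSemidef := by
    have := hS.mul_mul_conjTranspose_same (G - Ghat)
    rwa [hct] at this
  have h0 : 0 ≤ Matrix.trace ((G - Ghat) * S * (G - Ghat)ᵀ) := trace_nonneg_of_psd hp
  have hcyc : Matrix.trace ((G - Ghat) * S * (G - Ghat)ᵀ)
      = Matrix.trace (S * ((G - Ghat)ᵀ * (G - Ghat))) := by
    rw [Matrix.mul_assoc, Matrix.trace_mul_comm, Matrix.mul_assoc]
  have hexp : (G - Ghat)ᵀ * (G - Ghat) = 1 + 1 - Gᵀ * Ghat - Ghatᵀ * G := by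
    rw [Matrix.transpose_sub, Matrix.sub_mul, Matrix.mul_sub, Matrix.mul_sub, hG, hGhat]
    abel
  have htt : Matrix.trace (S * (Ghatᵀ * G)) = Matrix.trace (S * (Gᵀ * Ghat)) := by
    rw [← Matrix.trace_transpose (S * (Ghatᵀ * G)), Matrix.transpose_mul,
      Matrix.transpose_mul, Matrix.transpose_transpose, hSsym,
      Matrix.trace_mul_comm]
  rw [hcyc, hexp] at h0
  simp only [Matrix.mul_sub, Matrix.mul_add, Matrix.mul_one, Matrix.trace_sub,
    Matrix.trace_add, htt] at h0
  linarith

/-- if `tr(GᵀD) > 0`, `ĜᵀD = DᵀĜ` is positive semidefinite, and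
`tr(ĜᵀE(G)Ĝ) < tr(GᵀE(G)G)`, then `η(Ĝ) > η(G)`. -/
theorem eta_gt_of_trace_lt
    (n k : ℕ) (hk1 : 1 ≤ k) (hkn : k < n)
    (A : Matrix (Fin n) (Fin n) ℝ) (hA : A.PosDef)
    (D : Matrix (Fin n) (Fin k) ℝ)
    (G Ghat : Matrix (Fin n) (Fin k) ℝ) (hG : Gᵀ * G = 1) (hGhat : Ghatᵀ * Ghat = 1)
    (htr : 0 < Matrix.trace (Gᵀ * D))
    (hsym : Ghatᵀ * D = Dᵀ * Ghat) (hpsd : (Ghatᵀ * D).PosSemidef)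
    (hlt : Matrix.trace (Ghatᵀ * Emat A D G * Ghat) < Matrix.trace (Gᵀ * Emat A D G * G)) :
    eta A D G < eta A D Ghat := by
  set t := Matrix.trace (Gᵀ * D) with ht_def
  set th := Matrix.trace (Ghatᵀ * D) with hth_def
  set a := Matrix.trace (Gᵀ * A * G) with ha_def
  set ah := Matrix.trace (Ghatᵀ * A * Ghat) with hah_def
  have ha : 0 < a := trace_conj_pos hk1 hA hG
  have hah : 0 < ah := trace_conj_pos hk1 hA hGhat
  have hxi : xi A D G = a / t := rfl
  set c := Matrix.trace (Ghatᵀ * D * (Gᵀ * Ghat)) with hc_def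
  -- E-trace expansion
  have hE : ∀ (H : Matrix (Fin n) (Fin k) ℝ),
      Matrix.trace (Hᵀ * Emat A D G * H)
        = Matrix.trace (Hᵀ * A * H)
          - (a / t) * (Matrix.trace (Hᵀ * (D * Gᵀ) * H) + Matrix.trace (Hᵀ * (G * Dᵀ) * H)) := by
    intro H
    simp only [Emat, hxi, Matrix.mul_sub, Matrix.sub_mul, Matrix.mul_smul, Matrix.smul_mul,
      Matrix.trace_sub, Matrix.trace_smul, smul_eq_mul, Matrix.mul_add, Matrix.add_mul,
      Matrix.trace_add]
  -- trace at G
  have e1 : Gᵀ * (D * Gᵀ) * G = Gᵀ * D * (Gᵀ * G) := by simp only [Matrix.mul_assoc]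
  have e2 : Gᵀ * (G * Dᵀ) * G = Gᵀ * G * (Dᵀ * G) := by simp only [Matrix.mul_assoc]
  have hDtG : Matrix.trace (Dᵀ * G) = t := by
    rw [ht_def, ← Matrix.trace_transpose (Gᵀ * D), Matrix.transpose_mul,
      Matrix.transpose_transpose]
  have hG1 : Matrix.trace (Gᵀ * Emat A D G * G) = -a := by
    rw [hE G, e1, e2, hG, Matrix.mul_one, Matrix.one_mul, ← ht_def, hDtG, ← ha_def]
    field_simp
    ring
  -- trace at Ghat
  have f1 : Ghatᵀ * (D * Gᵀ) * Ghat = Ghatᵀ * D * (Gᵀ * Ghat) := by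
    simp only [Matrix.mul_assoc]
  have f2 : Matrix.trace (Ghatᵀ * (G * Dᵀ) * Ghat) = c := by
    rw [hc_def, ← Matrix.trace_transpose (Ghatᵀ * (G * Dᵀ) * Ghat)]
    congr 1
    simp only [Matrix.transpose_mul, Matrix.transpose_transpose, Matrix.mul_assoc]
  have hG2 : Matrix.trace (Ghatᵀ * Emat A D G * Ghat) = ah - (a / t) * (c + c) := by
    rw [hE Ghat, f1, f2, ← hc_def, ← hah_def]
  -- key inequality c ≤ th
  have hSsym : (Ghatᵀ * D)ᵀ = Ghatᵀ * D := by
    rw [Matrix.transpose_mul, Matrix.transpose_transpose, ← hsym]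
  have hcle : c ≤ th := by
    have := trace_prod_le hpsd hSsym hG hGhat
    rwa [← hc_def, ← hth_def] at this
  -- combine
  rw [hG1, hG2] at hlt
  have ht : 0 < t := htr
  have hmain : ah * t < 2 * a * th - a * t := by
    have h1 : ah - (a / t) * (c + c) < -a := hlt
    have h2 : (a / t) * (c + c) * t = 2 * a * c := by field_simp; ring
    nlinarith [mul_lt_mul_of_pos_right h1 ht, mul_le_mul_of_nonneg_left hcle (by positivity : (0:ℝ) ≤ 2 * a)]
  show t ^ 2 / a < th ^ 2 / ah
  rw [div_lt_div_iff₀ ha hah]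
  nlinarith [mul_nonneg ha.le (sq_nonneg (th - t)), mul_lt_mul_of_pos_left hmain ht]
end

section
/- Let Ĝ ∈ 𝕆^{n×k} and let D be a real n×k matrix with rank(DᵀĜ) = k. Then among all matrices of the form Ĝ Q with Q ∈ 𝕆^{k×k}, there is exactly one matrix G such that GᵀD is symmetric positive semidefinite; i.e., there exists a unique Q ∈ 𝕆^{k×k} such that (ĜQ)ᵀD = Dᵀ(ĜQ) and (ĜQ)ᵀD is positive semidefinite. -/
open Matrix
open scoped MatrixOrder

private lemma rank_eq_card_isUnit_det {k : ℕ} (B : Matrix (Fin k) (Fin k) ℝ)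
    (h : B.rank = k) : IsUnit B.det := by
  rw [isUnit_iff_ne_zero]
  intro hdet
  obtain ⟨v, hv, hmv⟩ := (Matrix.exists_mulVec_eq_zero_iff.mpr hdet)
  have hker : v ∈ LinearMap.ker B.mulVecLin := by simpa [Matrix.mulVecLin] using hmv
  have hrn := LinearMap.finrank_range_add_finrank_ker B.mulVecLin
  rw [show Module.finrank ℝ (Fin k → ℝ) = k by simp] at hrn
  have hr : Module.finrank ℝ (LinearMap.range B.mulVecLin) = k := h
  have hk0 : Module.finrank ℝ (LinearMap.ker B.mulVecLin) = 0 := by omega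
  have hbot : LinearMap.ker B.mulVecLin = ⊥ := Submodule.finrank_eq_zero.mp hk0
  rw [hbot] at hker
  exact hv (by simpa using hker)

private lemma polar_unique {k : ℕ} (A : Matrix (Fin k) (Fin k) ℝ) (hdetA : IsUnit A.det) :
    ∃! Q : Matrix (Fin k) (Fin k) ℝ, Qᵀ * Q = 1 ∧ Qᵀ * A = Aᵀ * Q ∧ (Qᵀ * A).PosSemidef := by
  have hAinv : A * A⁻¹ = 1 := Matrix.mul_nonsing_inv A hdetA
  have hM : (Aᵀ * A).PosSemidef := by
    have h1 := Matrix.posSemidef_conjTranspose_mul_self A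
    simpa [Matrix.conjTranspose_eq_transpose_of_trivial] using h1
  set S : Matrix (Fin k) (Fin k) ℝ := CFC.sqrt (Aᵀ * A) with hSdef
  have hS : S.PosSemidef := Matrix.nonneg_iff_posSemidef.mp (CFC.sqrt_nonneg _)
  have hSsym : Sᵀ = S := by
    have h1 := hS.isHermitian
    simpa [Matrix.IsHermitian, Matrix.conjTranspose_eq_transpose_of_trivial] using h1
  have hSS : S * S = Aᵀ * A := CFC.sqrt_mul_sqrt_self _ hM.nonneg
  have hdetS : IsUnit S.det := by
    have h2 : S.det * S.det = A.det * A.det := by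
      have h3 := congrArg Matrix.det hSS
      simpa [Matrix.det_mul, Matrix.det_transpose] using h3
    rw [isUnit_iff_ne_zero] at hdetA ⊢
    intro h0
    rw [h0, mul_zero] at h2
    exact hdetA (mul_self_eq_zero.mp h2.symm)
  have hSinv : S⁻¹ * S = 1 := Matrix.nonsing_inv_mul S hdetS
  have hSinv' : S * S⁻¹ = 1 := Matrix.mul_nonsing_inv S hdetS
  have hSinvT : (S⁻¹)ᵀ = S⁻¹ := by rw [Matrix.transpose_nonsing_inv, hSsym]
  have hQA : (A * S⁻¹)ᵀ * A = S := by
    rw [Matrix.transpose_mul, hSinvT]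
    calc S⁻¹ * Aᵀ * A = S⁻¹ * (S * S) := by rw [Matrix.mul_assoc, hSS]
      _ = S := by rw [← Matrix.mul_assoc, hSinv, one_mul]
  refine ⟨A * S⁻¹, ⟨?_, ?_, ?_⟩, ?_⟩
  · rw [Matrix.transpose_mul, hSinvT]
    calc S⁻¹ * Aᵀ * (A * S⁻¹) = S⁻¹ * (Aᵀ * A) * S⁻¹ := by
          simp only [Matrix.mul_assoc]
      _ = (S⁻¹ * S) * (S * S⁻¹) := by rw [← hSS]; simp only [Matrix.mul_assoc]
      _ = 1 := by rw [hSinv, hSinv', one_mul]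
  · rw [hQA]
    have h4 : Aᵀ * (A * S⁻¹) = ((A * S⁻¹)ᵀ * A)ᵀ := by
      rw [Matrix.transpose_mul, Matrix.transpose_transpose]
    rw [h4, hQA, hSsym]
  · rw [hQA]; exact hS
  · rintro Q ⟨hQorth, hQsym, hQpsd⟩
    have hQQ' : Q * Qᵀ = 1 := mul_eq_one_comm.mp hQorth
    have hsq : (Qᵀ * A) ^ 2 = Aᵀ * A := by
      rw [pow_two]
      calc (Qᵀ * A) * (Qᵀ * A) = (Aᵀ * Q) * (Qᵀ * A) := by rw [← hQsym]
        _ = Aᵀ * (Q * Qᵀ) * A := by simp only [Matrix.mul_assoc]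
        _ = Aᵀ * A := by rw [hQQ', Matrix.mul_one]
    have hSeq : Qᵀ * A = S := ((CFC.sqrt_eq_iff (Aᵀ * A) (Qᵀ * A) hM.nonneg hQpsd.nonneg).mpr (by rw [← pow_two]; exact hsq)).symm
    have hTeq : Qᵀ = (A * S⁻¹)ᵀ := by
      have h1 : Qᵀ * A * A⁻¹ = (A * S⁻¹)ᵀ * A * A⁻¹ := by rw [hSeq, hQA]
      rwa [Matrix.mul_assoc, Matrix.mul_assoc, hAinv, Matrix.mul_one, Matrix.mul_one] at h1
    calc Q = Qᵀᵀ := (Matrix.transpose_transpose Q).symm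
      _ = A * S⁻¹ := by rw [hTeq, Matrix.transpose_transpose]

/-- if `rank(DᵀĜ) = k`, then among all matrices `ĜQ` with `Q ∈ 𝕆^{k×k}` there is
exactly one matrix `G = ĜQ` such that `GᵀD` is symmetric positive semidefinite. -/
theorem unique_orthogonal_rotation_posSemidef
    (n k : ℕ) (hk1 : 1 ≤ k) (hkn : k < n)
    (Ghat : Matrix (Fin n) (Fin k) ℝ) (hGhat : Ghatᵀ * Ghat = 1)
    (D : Matrix (Fin n) (Fin k) ℝ) (hrank : (Dᵀ * Ghat).rank = k) :
    ∃! Q : Matrix (Fin k) (Fin k) ℝ, Qᵀ * Q = 1 ∧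
      (Ghat * Q)ᵀ * D = Dᵀ * (Ghat * Q) ∧ ((Ghat * Q)ᵀ * D).PosSemidef := by
  have hdetA : IsUnit (Ghatᵀ * D).det := by
    have h1 := rank_eq_card_isUnit_det (Dᵀ * Ghat) hrank
    have hAT : (Ghatᵀ * D)ᵀ = Dᵀ * Ghat := by
      rw [Matrix.transpose_mul, Matrix.transpose_transpose]
    rwa [← hAT, Matrix.det_transpose] at h1
  have hexpr : ∀ Q : Matrix (Fin k) (Fin k) ℝ, (Ghat * Q)ᵀ * D = Qᵀ * (Ghatᵀ * D) := fun Q => by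
    rw [Matrix.transpose_mul, Matrix.mul_assoc]
  have hexpr2 : ∀ Q : Matrix (Fin k) (Fin k) ℝ, Dᵀ * (Ghat * Q) = (Ghatᵀ * D)ᵀ * Q := fun Q => by
    rw [Matrix.transpose_mul, Matrix.transpose_transpose, Matrix.mul_assoc]
  obtain ⟨Q, ⟨h1, h2, h3⟩, huniq⟩ := polar_unique (Ghatᵀ * D) hdetA
  refine ⟨Q, ⟨h1, by rw [hexpr, hexpr2]; exact h2, by rw [hexpr]; exact h3⟩, ?_⟩
  rintro Q' ⟨h1', h2', h3'⟩
  exact huniq Q' ⟨h1', by rw [hexpr, hexpr2] at h2'; exact h2', by rw [hexpr] at h3'; exact h3'⟩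
end
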